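/- arXiv:1308.1190 — 2 statements merged into one kernel-verified Lean document; each statement's English description precedes it below -/
import Mathlib

section
/- For the identity operator Id on Λ²ℝⁿ, the quadratic vector field Q(R) = R² + R^# satisfies Q(Id) = (n−1)·Id. -/
open Matrix

noncomputable section

/-! Model of Λ²ℝⁿ as the space of skew-symmetric n×n real matrices, via the
identification x∧y ↦ (u ↦ ⟨x,u⟩y - ⟨y,u⟩x), with inner product
⟨x∧y, z∧t⟩ = ⟨x,z⟩⟨y,t⟩ - ⟨x,t⟩⟨y,z⟩, i.e. ⟨A,B⟩ = (1/2) tr(AᵀB). -/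

/-- Λ²ℝⁿ, modelled as skew-symmetric matrices. -/
def sk (n : ℕ) : Submodule ℝ (Matrix (Fin n) (Fin n) ℝ) where
  carrier := {A | Aᵀ = -A}
  add_mem' := by
    intro a b ha hb
    simp only [Set.mem_setOf_eq] at *
    rw [Matrix.transpose_add, ha, hb, neg_add]
  zero_mem' := by simp
  smul_mem' := by
    intro c a ha
    simp only [Set.mem_setOf_eq] at *
    rw [Matrix.transpose_smul, ha, smul_neg]

theorem sk_mem {n : ℕ} {A : Matrix (Fin n) (Fin n) ℝ} : A ∈ sk n ↔ Aᵀ = -A := Iff.rfl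

/-- The inner product on Λ²ℝⁿ induced by the standard one on ℝⁿ. -/
def ip {n : ℕ} (A B : sk n) : ℝ := (∑ i, ∑ j, A.1 i j * B.1 i j) / 2

/-- The wedge product x∧y of two vectors of ℝⁿ, as an element of Λ²ℝⁿ. -/
def wedge {n : ℕ} (x y : Fin n → ℝ) : sk n :=
  ⟨Matrix.of fun i j => x i * y j - x j * y i, by
    rw [sk_mem]
    ext i j
    simp only [Matrix.transpose_apply, Matrix.of_apply, Matrix.neg_apply]
    ring⟩

/-- The Lie bracket on Λ²ℝⁿ ≅ so(n). -/
def br {n : ℕ} (A B : sk n) : sk n :=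
  ⟨A.1 * B.1 - B.1 * A.1, by
    have hA := A.2
    have hB := B.2
    rw [sk_mem] at *
    rw [Matrix.transpose_sub, Matrix.transpose_mul, Matrix.transpose_mul, hA, hB]
    simp only [Matrix.neg_mul, Matrix.mul_neg, neg_neg, neg_sub]⟩

/-- The i-th standard basis vector of ℝⁿ. -/
def stdVec (n : ℕ) (i : Fin n) : Fin n → ℝ := Pi.single i 1

/-- A symmetric endomorphism of Λ²ℝⁿ. -/
def IsSym {n : ℕ} (R : sk n →ₗ[ℝ] sk n) : Prop := ∀ A B, ip (R A) B = ip A (R B)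

/-- The first Bianchi identity. -/
def Bianchi {n : ℕ} (R : sk n →ₗ[ℝ] sk n) : Prop :=
  ∀ x y z t : Fin n → ℝ,
    ip (R (wedge x y)) (wedge z t) + ip (R (wedge z x)) (wedge y t)
      + ip (R (wedge y z)) (wedge x t) = 0

/-- The quadratic form η ↦ ⟨R^# η, η⟩ = -(1/2) ∑ᵢ ⟨[η, R([η, R(ωᵢ)])], ωᵢ⟩,
summed over the orthonormal basis (ωᵢⱼ = eᵢ∧eⱼ)_{i<j} of Λ²ℝⁿ. -/
def sharpForm {n : ℕ} (R : sk n →ₗ[ℝ] sk n) (η : sk n) : ℝ :=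
  -(1 / 2) * ∑ i, ∑ j,
    if i < j then
      ip (br η (R (br η (R (wedge (stdVec n i) (stdVec n j))))))
        (wedge (stdVec n i) (stdVec n j))
    else 0

/-- `S` is the sharp R^# of `R`: the symmetric operator whose quadratic form is
`sharpForm R`. -/
def IsSharp {n : ℕ} (R S : sk n →ₗ[ℝ] sk n) : Prop :=
  IsSym S ∧ ∀ η, ip (S η) η = sharpForm R η

/-- The Ricci tensor of a curvature operator. -/
def ric {n : ℕ} (R : sk n →ₗ[ℝ] sk n) (x y : Fin n → ℝ) : ℝ :=
  ∑ i, ip (R (wedge x (stdVec n i))) (wedge y (stdVec n i))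

/-- The inner product on endomorphisms of Λ²ℝⁿ induced by that of Λ²ℝⁿ. -/
def opIp {n : ℕ} (R S : sk n →ₗ[ℝ] sk n) : ℝ :=
  ∑ i, ∑ j,
    if i < j then
      ip (R (wedge (stdVec n i) (stdVec n j))) (S (wedge (stdVec n i) (stdVec n j)))
    else 0

lemma skew_apply {n : ℕ} (A : sk n) (i j : Fin n) : A.1 j i = - A.1 i j := by
  have := A.2
  rw [sk_mem] at this
  have := congrFun (congrFun this i) j
  simpa [Matrix.transpose_apply] using this

lemma ip_wedge {n : ℕ} (A : sk n) (i j : Fin n) :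
    ip A (wedge (stdVec n i) (stdVec n j)) = A.1 i j := by
  simp only [ip, wedge, stdVec, Matrix.of_apply, Pi.single_apply, mul_sub, mul_ite, mul_one,
    mul_zero, ite_mul, zero_mul, Finset.sum_sub_distrib, Finset.sum_ite_eq', Finset.mem_univ,
    if_true]
  rw [Finset.sum_comm]
  simp only [Finset.sum_ite_eq', Finset.mem_univ, if_true]
  rw [skew_apply A j i]
  ring
lemma sum_ite_const {n : ℕ} (c : Prop) [Decidable c] (f : Fin n → ℝ) :
    ∑ x, (if c then f x else 0) = if c then ∑ x, f x else 0 := by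
  split <;> simp

lemma br_br_entry {n : ℕ} (η : sk n) {i j : Fin n} (hij : i ≠ j) :
    (br η (br η (wedge (stdVec n i) (stdVec n j)))).1 i j
      = -(∑ k, η.1 i k ^ 2) - (∑ k, η.1 j k ^ 2) + 2 * (η.1 i j)^2 := by
  simp only [br, wedge, stdVec, Matrix.sub_apply, Matrix.mul_apply, Matrix.of_apply,
    Pi.single_apply, mul_sub, sub_mul, mul_ite, ite_mul, mul_one, one_mul, mul_zero, zero_mul,
    Finset.sum_sub_distrib, Finset.sum_ite_eq, Finset.sum_ite_eq', Finset.mem_univ, if_true]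
  simp only [hij, Ne.symm hij, if_false, Finset.sum_const_zero, sum_ite_const,
    Finset.sum_ite_eq, Finset.sum_ite_eq', Finset.mem_univ, if_true, mul_ite, ite_mul,
    mul_zero, zero_mul]
  have h1 : ∀ k, η.1 i k * η.1 k i = -(η.1 i k ^2) := fun k => by
    rw [skew_apply η i k]; ring
  have h2 : ∀ k, η.1 j k * η.1 k j = -(η.1 j k ^2) := fun k => by
    rw [skew_apply η j k]; ring
  rw [Finset.sum_congr rfl (fun k _ => h1 k), Finset.sum_congr rfl (fun k _ => h2 k)]
  have hii : η.1 i i = 0 := by have := skew_apply η i i; linarith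
  rw [hii, Finset.sum_neg_distrib, Finset.sum_neg_distrib]
  ring
lemma sharp_id {n : ℕ} (η : sk n) :
    sharpForm (LinearMap.id : sk n →ₗ[ℝ] sk n) η = ((n:ℝ) - 2) * ip η η := by
  classical
  set N : Matrix (Fin n) (Fin n) ℝ := η.1 with hN
  set r : Fin n → ℝ := fun i => ∑ k, N i k ^ 2 with hrdef
  set T : ℝ := ∑ i, r i with hT
  set h : Fin n → Fin n → ℝ := fun i j => -(r i) - r j + 2 * N i j ^ 2 with hh
  have hsymm : ∀ i j, h j i = h i j := by
    intro i j
    have hsq : N j i ^ 2 = N i j ^ 2 := by rw [hN, skew_apply η i j]; ring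
    simp only [hh, hsq]; ring
  have hdiag : ∀ i, h i i = -2 * r i := by
    intro i
    have hii : N i i = 0 := by
      have := skew_apply η i i; rw [← hN] at this; linarith
    simp only [hh, hii]; ring
  set A : ℝ := ∑ i, ∑ j, if i < j then h i j else 0 with hA
  have step1 : sharpForm (LinearMap.id : sk n →ₗ[ℝ] sk n) η = -(1/2) * A := by
    unfold sharpForm
    congr 1
    refine Finset.sum_congr rfl fun i _ => Finset.sum_congr rfl fun j _ => ?_
    split_ifs with hij
    · rw [LinearMap.id_apply, LinearMap.id_apply, ip_wedge, br_br_entry η (ne_of_lt hij)]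
    · rfl
  have hswap : A = ∑ i, ∑ j, if j < i then h i j else 0 := by
    rw [hA, Finset.sum_comm]
    exact Finset.sum_congr rfl fun i _ => Finset.sum_congr rfl fun j _ => by rw [hsymm]
  have h2A : A + A = ∑ i, ∑ j, (if i = j then 0 else h i j) := by
    nth_rewrite 2 [hswap]
    nth_rewrite 1 [hA]
    rw [← Finset.sum_add_distrib]
    refine Finset.sum_congr rfl fun i _ => ?_
    rw [← Finset.sum_add_distrib]
    refine Finset.sum_congr rfl fun j _ => ?_
    rcases lt_trichotomy i j with hlt | heq | hgt
    · rw [if_pos hlt, if_neg (not_lt_of_gt hlt), if_neg (ne_of_lt hlt), add_zero]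
    · simp [heq]
    · rw [if_neg (not_lt_of_gt hgt), if_pos hgt, if_neg (ne_of_gt hgt), zero_add]
  have hrow : ∀ i, (∑ j, h i j) = -(n:ℝ) * r i - T + 2 * r i := by
    intro i
    have e : ∀ j, h i j = (-(r i) - r j) + 2 * N i j ^ 2 := fun j => rfl
    rw [Finset.sum_congr rfl fun j _ => e j, Finset.sum_add_distrib, Finset.sum_sub_distrib,
      Finset.sum_const, Finset.card_univ, Fintype.card_fin, ← Finset.mul_sum]
    have : (∑ j, N i j ^ 2) = r i := rfl
    rw [this, ← hT, nsmul_eq_mul]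
    ring
  have hdiagsum : ∀ i, (∑ j, if i = j then 0 else h i j) = (∑ j, h i j) - h i i := by
    intro i
    have e : ∀ j, (if i = j then 0 else h i j) = h i j - (if j = i then h i j else 0) := by
      intro j; by_cases hij : i = j
      · subst hij; simp
      · rw [if_neg hij, if_neg (Ne.symm hij), sub_zero]
    rw [Finset.sum_congr rfl fun j _ => e j, Finset.sum_sub_distrib,
      Finset.sum_ite_eq' Finset.univ i (h i), if_pos (Finset.mem_univ i)]
  have hAval : A + A = (4 - 2*(n:ℝ)) * T := by
    rw [h2A, Finset.sum_congr rfl fun i _ => hdiagsum i, Finset.sum_sub_distrib,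
      Finset.sum_congr rfl fun i _ => hrow i, Finset.sum_congr rfl fun i _ => hdiag i,
      Finset.sum_add_distrib, Finset.sum_sub_distrib, ← Finset.mul_sum, ← Finset.mul_sum,
      ← Finset.mul_sum, Finset.sum_const, Finset.card_univ, Fintype.card_fin, ← hT,
      nsmul_eq_mul]
    ring
  have hip : ip η η = T / 2 := by
    unfold ip
    rw [hT]
    congr 1
    refine Finset.sum_congr rfl fun i _ => ?_
    rw [hrdef]
    exact Finset.sum_congr rfl fun j _ => by rw [← hN]; ring
  rw [step1, hip]
  linarith [hAval]
lemma ip_comm {n : ℕ} (A B : sk n) : ip A B = ip B A := by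
  unfold ip
  congr 1
  exact Finset.sum_congr rfl fun i _ => Finset.sum_congr rfl fun j _ => by ring

lemma ip_add_left {n : ℕ} (A B C : sk n) : ip (A + B) C = ip A C + ip B C := by
  unfold ip
  rw [← add_div]
  congr 1
  rw [← Finset.sum_add_distrib]
  refine Finset.sum_congr rfl fun i _ => ?_
  rw [← Finset.sum_add_distrib]
  refine Finset.sum_congr rfl fun j _ => ?_
  simp [Matrix.add_apply]
  ring

lemma ip_smul_left {n : ℕ} (c : ℝ) (A B : sk n) : ip (c • A) B = c * ip A B := by
  unfold ip
  rw [← mul_div_assoc, Finset.mul_sum]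
  congr 1
  refine Finset.sum_congr rfl fun i _ => ?_
  rw [Finset.mul_sum]
  refine Finset.sum_congr rfl fun j _ => ?_
  simp [Matrix.smul_apply]
  ring

lemma ip_sub_left {n : ℕ} (A B C : sk n) : ip (A - B) C = ip A C - ip B C := by
  have := ip_add_left (A - B) B C
  rw [sub_add_cancel] at this
  linarith

lemma ip_self_zero {n : ℕ} {A : sk n} (h : ip A A = 0) : A = 0 := by
  have h1 : ∑ i, ∑ j, A.1 i j * A.1 i j = 0 := by
    unfold ip at h; linarith
  apply Subtype.ext
  ext i j
  have h2 := (Finset.sum_eq_zero_iff_of_nonneg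
    (fun i _ => Finset.sum_nonneg fun j _ => mul_self_nonneg (A.1 i j))).1 h1 i (Finset.mem_univ i)
  have h3 := (Finset.sum_eq_zero_iff_of_nonneg
    (fun j _ => mul_self_nonneg (A.1 i j))).1 h2 j (Finset.mem_univ j)
  simpa using mul_self_eq_zero.mp h3
lemma ip_add_right {n : ℕ} (A B C : sk n) : ip A (B + C) = ip A B + ip A C := by
  rw [ip_comm, ip_add_left, ip_comm B A, ip_comm C A]

/-- For the identity operator Id on Λ²ℝⁿ, the quadratic vector field
Q(R) = R² + R^# satisfies Q(Id) = (n-1)·Id. -/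
theorem stmt7 (n : ℕ) (S : sk n →ₗ[ℝ] sk n) (hS : IsSharp LinearMap.id S) :
    (LinearMap.id ∘ₗ LinearMap.id : sk n →ₗ[ℝ] sk n) + S
      = ((n : ℝ) - 1) • LinearMap.id := by
  obtain ⟨hSym, hQ⟩ := hS
  set c : ℝ := (n:ℝ) - 2 with hc
  set f : sk n → sk n := fun x => S x - c • x with hf
  have hq : ∀ η, ip (f η) η = 0 := by
    intro η
    show ip (S η - c • η) η = 0
    rw [ip_sub_left, ip_smul_left, hQ η, sharp_id η, hc]
    ring
  have hsf : ∀ x y, ip (f x) y = ip (f y) x := by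
    intro x y
    show ip (S x - c • x) y = ip (S y - c • y) x
    rw [ip_sub_left, ip_sub_left, ip_smul_left, ip_smul_left, hSym x y,
      ip_comm x (S y), ip_comm x y]
  have hpol : ∀ x y, ip (f x) y = 0 := by
    intro x y
    have h0 := hq (x + y)
    have hfa : f (x + y) = f x + f y := by
      show S (x + y) - c • (x + y) = (S x - c • x) + (S y - c • y)
      rw [map_add, smul_add]; abel
    rw [hfa, ip_add_left, ip_add_right, ip_add_right] at h0
    have h1 := hq x
    have h2 := hq y
    have h3 := hsf y x
    linarith
  have key : ∀ a : sk n, S a = c • a := by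
    intro a
    have : f a = 0 := ip_self_zero (hpol a (f a))
    have : S a - c • a = 0 := this
    linear_combination (norm := module) this
  apply LinearMap.ext
  intro a
  simp only [LinearMap.add_apply, LinearMap.comp_apply, LinearMap.id_apply,
    LinearMap.smul_apply, key a, hc]
  module
end
end

section
/- Let C be a closed convex cone in S²_B Λ²ℝⁿ, invariant under the ODE dR/dt = Q(R) (Ricci flow invariant), and suppose R̄ ∈ C satisfies Q(R̄_Id) = (1−ε)R̄_Id and Q(R̄_W) = R̄_W for its identity and Weyl components, with 0 < ε < 1 and R̄₀ = 0. Then the explicit solution R̄(t) = (1/(1−(1−ε)t)) R̄_Id + (1/(1−t)) R̄_W solves dR̄/dt = Q(R̄(t)) for t ∈ [0,1), and consequently R̄_W = lim_{t→1} (1−t)R̄(t) lies in C. -/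
/-- Let C be a closed convex cone in the space of algebraic curvature
operators (modelled by a finite-dimensional real normed space E), invariant under the
ODE dR/dt = Q(R) (Ricci flow invariant).  Suppose R̄ = R̄_Id + R̄_W ∈ C where
Q(R̄_Id) = (1-ε)•R̄_Id and Q(R̄_W) = R̄_W with 0 < ε < 1 (the traceless Ricci part
R̄₀ being 0), and Q is quadratic with B(R̄_Id, R̄_W) = 0, so that
Q(a•R̄_Id + b•R̄_W) = a²•Q(R̄_Id) + b²•Q(R̄_W).  Then the explicit curve
R̄(t) = (1/(1-(1-ε)t))•R̄_Id + (1/(1-t))•R̄_W solves dR̄/dt = Q(R̄(t)) on [0,1),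
R̄_W = lim_{t→1⁻} (1-t)•R̄(t), and consequently R̄_W ∈ C. -/
theorem stmt12 {E : Type*} [NormedAddCommGroup E] [NormedSpace ℝ E]
    [FiniteDimensional ℝ E]
    (Q : E → E) (C : Set E) (hclosed : IsClosed C) (hconv : Convex ℝ C)
    (hcone : ∀ x ∈ C, ∀ r : ℝ, 0 ≤ r → r • x ∈ C)
    (hinv : ∀ (R : ℝ → E) (T : ℝ), 0 < T →
      (∀ t ∈ Set.Ico (0 : ℝ) T, HasDerivAt R (Q (R t)) t) → R 0 ∈ C →
      ∀ t ∈ Set.Ico (0 : ℝ) T, R t ∈ C)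
    (RId RW : E) (ε : ℝ) (hε0 : 0 < ε) (hε1 : ε < 1)
    (hquad : ∀ a b : ℝ, Q (a • RId + b • RW) = (a ^ 2) • Q RId + (b ^ 2) • Q RW)
    (hQI : Q RId = (1 - ε) • RId) (hQW : Q RW = RW)
    (hmem : RId + RW ∈ C) :
    (∀ t ∈ Set.Ico (0 : ℝ) 1,
      HasDerivAt (fun s : ℝ => (1 / (1 - (1 - ε) * s)) • RId + (1 / (1 - s)) • RW)
        (Q ((1 / (1 - (1 - ε) * t)) • RId + (1 / (1 - t)) • RW)) t) ∧
    Filter.Tendsto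
      (fun t : ℝ => (1 - t) • ((1 / (1 - (1 - ε) * t)) • RId + (1 / (1 - t)) • RW))
      (nhdsWithin 1 (Set.Iio 1)) (nhds RW) ∧
    RW ∈ C := by
  have hne1 : ∀ t ∈ Set.Ico (0:ℝ) 1, (1 - (1 - ε) * t) ≠ 0 := by
    intro t ht
    have h1 : (1 - ε) * t < 1 := by nlinarith [ht.1, ht.2]
    linarith
  have hne2 : ∀ t ∈ Set.Ico (0:ℝ) 1, (1 - t) ≠ 0 := by
    intro t ht; have := ht.2; linarith
  have hderiv : ∀ t ∈ Set.Ico (0:ℝ) 1,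
      HasDerivAt (fun s : ℝ => (1 / (1 - (1 - ε) * s)) • RId + (1 / (1 - s)) • RW)
        (Q ((1 / (1 - (1 - ε) * t)) • RId + (1 / (1 - t)) • RW)) t := by
    intro t ht
    have h1 : (1 - (1 - ε) * t) ≠ 0 := hne1 t ht
    have h2 : (1 - t) ≠ 0 := hne2 t ht
    have d1' : HasDerivAt (fun s : ℝ => 1 - (1 - ε) * s) (-(1 - ε)) t := by
      exact ((hasDerivAt_const t (1:ℝ)).sub ((hasDerivAt_id t).const_mul (1 - ε))).congr_deriv (by ring)
    have d1 : HasDerivAt (fun s : ℝ => 1 / (1 - (1 - ε) * s))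
        ((1 - ε) / (1 - (1 - ε) * t) ^ 2) t := by
      have := d1'.inv h1
      rw [show (fun s : ℝ => 1 / (1 - (1 - ε) * s)) = fun s => (1 - (1 - ε) * s)⁻¹ from funext fun s => one_div _]
      exact this.congr_deriv (by ring)
    have d2' : HasDerivAt (fun s : ℝ => 1 - s) (-1 : ℝ) t := by
      exact ((hasDerivAt_const t (1:ℝ)).sub (hasDerivAt_id t)).congr_deriv (by ring)
    have d2 : HasDerivAt (fun s : ℝ => 1 / (1 - s)) (1 / (1 - t) ^ 2) t := by
      have := d2'.inv h2
      rw [show (fun s : ℝ => 1 / (1 - s)) = fun s => (1 - s)⁻¹ from funext fun s => one_div _]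
      exact this.congr_deriv (by ring)
    have dtot := (d1.smul_const RId).add (d2.smul_const RW)
    have hQ : Q ((1 / (1 - (1 - ε) * t)) • RId + (1 / (1 - t)) • RW)
        = ((1 - ε) / (1 - (1 - ε) * t) ^ 2) • RId + (1 / (1 - t) ^ 2) • RW := by
      have e1 : (1 / (1 - (1 - ε) * t)) ^ 2 * (1 - ε) = (1 - ε) / (1 - (1 - ε) * t) ^ 2 := by
        rw [div_pow, one_pow, div_mul_eq_mul_div, one_mul]
      have e2 : (1 / (1 - t)) ^ 2 = 1 / (1 - t) ^ 2 := by
        rw [div_pow, one_pow]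
      rw [hquad, hQI, hQW, smul_smul, e1, e2]
    rw [hQ]
    exact dtot
  have htend : Filter.Tendsto
      (fun t : ℝ => (1 - t) • ((1 / (1 - (1 - ε) * t)) • RId + (1 / (1 - t)) • RW))
      (nhdsWithin 1 (Set.Iio 1)) (nhds RW) := by
    have heq : ∀ t ∈ Set.Iio (1:ℝ),
        (1 - t) • ((1 / (1 - (1 - ε) * t)) • RId + (1 / (1 - t)) • RW)
          = ((1 - t) / (1 - (1 - ε) * t)) • RId + RW := by
      intro t ht
      have h2 : (1 - t) ≠ 0 := by simp only [Set.mem_Iio] at ht; linarith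
      rw [smul_add, smul_smul, smul_smul]
      congr 1
      · congr 1; field_simp
      · rw [mul_one_div, div_self h2, one_smul]
    have hcont : Filter.Tendsto (fun t : ℝ => (1 - t) / (1 - (1 - ε) * t))
        (nhdsWithin 1 (Set.Iio 1)) (nhds 0) := by
      have hc : ContinuousAt (fun t : ℝ => (1 - t) / (1 - (1 - ε) * t)) 1 := by
        apply ContinuousAt.div
        · fun_prop
        · fun_prop
        · simp; linarith
      have h0 : ((1:ℝ) - 1) / (1 - (1 - ε) * 1) = 0 := by norm_num
      have := hc.continuousWithinAt (s := Set.Iio 1)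
      unfold ContinuousWithinAt at this
      rwa [show ((fun t : ℝ => (1 - t) / (1 - (1 - ε) * t)) 1) = 0 by norm_num] at this
    have hlim : Filter.Tendsto (fun t : ℝ => ((1 - t) / (1 - (1 - ε) * t)) • RId + RW)
        (nhdsWithin 1 (Set.Iio 1)) (nhds RW) := by
      have := (hcont.smul_const RId).add (tendsto_const_nhds (x := RW))
      simpa using this
    exact Filter.Tendsto.congr'
      (Filter.eventuallyEq_of_mem self_mem_nhdsWithin fun t ht => (heq t ht).symm) hlim
  refine ⟨hderiv, htend, ?_⟩
  -- membership of RW in C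
  set R : ℝ → E := fun s : ℝ => (1 / (1 - (1 - ε) * s)) • RId + (1 / (1 - s)) • RW with hR
  have hR0 : R 0 ∈ C := by
    have : R 0 = RId + RW := by simp [hR]
    rw [this]; exact hmem
  have hmemC : ∀ t ∈ Set.Ico (0:ℝ) 1, R t ∈ C :=
    hinv R 1 one_pos hderiv hR0
  have hsc : ∀ t ∈ Set.Ico (0:ℝ) 1, (1 - t) • R t ∈ C := by
    intro t ht
    exact hcone (R t) (hmemC t ht) (1 - t) (by linarith [ht.2])
  have hev : ∀ᶠ t in nhdsWithin 1 (Set.Iio 1), (1 - t) • R t ∈ C := by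
    have hIoo : Set.Ioo (0:ℝ) 1 ∈ nhdsWithin 1 (Set.Iio 1) :=
      Ioo_mem_nhdsLT_of_mem (by constructor <;> norm_num)
    filter_upwards [hIoo] with t ht
    exact hsc t ⟨le_of_lt ht.1, ht.2⟩
  exact hclosed.mem_of_tendsto htend hev
end
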